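/- Let Q be a finitely generated projective S-module (so ω is a non-zerodivisor on Q), let g : G → P be an injective S-linear map whose cokernel is annihilated by ω, and let φ₁ : G → Q and φ₀ : P → Q be S-linear maps such that φ₀ ∘ g = ω • φ₁ and φ₀ is surjective. Then there exist S-linear maps ψ₁ : Q → G and ψ₀ : Q → P such that g ∘ ψ₁ = ω • ψ₀, φ₁ ∘ ψ₁ = id_Q and φ₀ ∘ ψ₀ = id_Q. (This is the statement that (Q →ω→ Q) is a projective object of Mon(ω, 𝒢): every admissible epimorphism onto it splits; part of Lemma 2.9 of the paper.) -/

import Mathlib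

/-- part of Lemma 2.9: `(Q →ω→ Q)` is a projective object of
`Mon(ω, 𝒢)`.
Let `Q` be a finitely generated projective `S`-module, `g : G → P` injective
with cokernel annihilated by `ω`, and `(φ₁, φ₀) : (G →g→ P) → (Q →ω→ Q)` a
morphism of arrows (`φ₀ ∘ g = ω • φ₁`) with `φ₀` surjective.  Then the
morphism splits: there are `ψ₁ : Q → G` and `ψ₀ : Q → P` with
`g ∘ ψ₁ = ω • ψ₀`, `φ₁ ∘ ψ₁ = id_Q` and `φ₀ ∘ ψ₀ = id_Q`. -/
theorem stmt_7
    {S : Type*} [CommRing S] [IsNoetherianRing S] [IsLocalRing S]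
    (ω : S) (hω_mem : ω ∈ IsLocalRing.maximalIdeal S) (hω : ω ∈ nonZeroDivisors S)
    {Q G P : Type*}
    [AddCommGroup Q] [Module S Q] [Module.Finite S Q] [Module.Projective S Q]
    [AddCommGroup G] [Module S G] [Module.Finite S G]
    [AddCommGroup P] [Module S P] [Module.Finite S P]
    (g : G →ₗ[S] P) (hg : Function.Injective g)
    (hcoker : ∀ p : P, ω • p ∈ LinearMap.range g)
    (φ₁ : G →ₗ[S] Q) (φ₀ : P →ₗ[S] Q)
    (hcomm : φ₀.comp g = ω • φ₁)
    (hφ₀ : Function.Surjective φ₀) :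
    ∃ (ψ₁ : Q →ₗ[S] G) (ψ₀ : Q →ₗ[S] P),
      g.comp ψ₁ = ω • ψ₀ ∧
      φ₁.comp ψ₁ = LinearMap.id ∧
      φ₀.comp ψ₀ = LinearMap.id := by
  -- a linear section of φ₀ using projectivity of Q
  obtain ⟨s, hs⟩ := Module.projective_lifting_property φ₀ LinearMap.id hφ₀
  -- ψ₁ : lift ω • s through g
  set f : Q →ₗ[S] P := ω • s with hf
  have hfr : ∀ q, f q ∈ LinearMap.range g := fun q => hcoker (s q)
  let e : G ≃ₗ[S] LinearMap.range g := LinearEquiv.ofInjective g hg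
  let ψ₁ : Q →ₗ[S] G := e.symm.toLinearMap.comp (f.codRestrict (LinearMap.range g) hfr)
  have hgψ₁ : ∀ q, g (ψ₁ q) = f q := by
    intro q
    have : g (e.symm (f.codRestrict (LinearMap.range g) hfr q)) =
        ((f.codRestrict (LinearMap.range g) hfr q : LinearMap.range g) : P) := by
      have := e.apply_symm_apply (f.codRestrict (LinearMap.range g) hfr q)
      have h2 : ∀ x : G, ((e x : LinearMap.range g) : P) = g x := fun x => rfl
      calc g (e.symm (f.codRestrict (LinearMap.range g) hfr q))
          = ((e (e.symm (f.codRestrict (LinearMap.range g) hfr q)) : LinearMap.range g) : P) :=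
            (h2 _).symm
        _ = _ := by rw [this]
    have h' : g (e.symm (f.codRestrict (LinearMap.range g) hfr q)) = f q := by simpa using this
    exact h'
  -- ω-smul is injective on Q since Q is free and ω is a nonzerodivisor
  have : Module.FinitePresentation S Q := Module.finitePresentation_of_projective S Q
  have : Module.Free S Q := Module.free_of_flat_of_isLocalRing
  have hinj : ∀ x : Q, ω • x = 0 → x = 0 := by
    intro x hx
    let b := Module.Free.chooseBasis S Q
    have := congrArg b.repr hx
    rw [map_smul, map_zero] at this
    have hcoord : ∀ i, ω * b.repr x i = 0 := by
      intro i
      have := congrFun (congrArg DFunLike.coe this) i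
      simpa [Finsupp.smul_apply, smul_eq_mul] using this
    have : b.repr x = 0 := by
      ext i
      exact hω.2 _ (by simpa [mul_comm] using hcoord i)
    simpa using congrArg b.repr.symm this
  refine ⟨ψ₁, s, ?_, ?_, ?_⟩
  · ext q; simpa [hf] using hgψ₁ q
  · ext q
    rw [← sub_eq_zero]
    apply hinj
    have h1 : ω • φ₁ (ψ₁ q) = φ₀ (g (ψ₁ q)) := by
      have := congrFun (congrArg DFunLike.coe hcomm) (ψ₁ q)
      simpa using this.symm
    have h2 : φ₀ (g (ψ₁ q)) = ω • φ₀ (s q) := by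
      rw [hgψ₁ q]; simp [hf]
    have h3 : φ₀ (s q) = q := congrFun (congrArg DFunLike.coe hs) q
    simp only [LinearMap.comp_apply, LinearMap.id_apply, smul_sub]
    rw [h1, h2, h3, sub_self]
  · exact hs
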